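/- Consider the graph on ℤ^d (d ≥ 1) in which two vectors are adjacent if and only if their difference has ℓ∞-norm exactly 1. Let u, v ∈ ℤ^d be adjacent, let t_0 be the number of coordinates i with u_i = v_i and t_1 = d − t_0 (so t_1 ≥ 1). Then the number of common neighbours of u and v equals (3^{t_0} − 1)·2^{t_1} + 2^{t_1} − 2. In particular, every edge of this graph lies in an even number of triangles. -/

import Mathlib

/-- The graph on `ℤ^d` in which two vectors are adjacent iff their difference has
`ℓ∞`-norm exactly `1`. -/
def latticeGraph (d : ℕ) : SimpleGraph (Fin d → ℤ) where
  Adj u v := u ≠ v ∧ ∀ i, |u i - v i| ≤ 1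
  symm := by
    constructor
    intro u v h
    exact ⟨h.1.symm, fun i => by rw [abs_sub_comm]; exact h.2 i⟩
  loopless := by
    constructor
    intro u h
    exact h.1 rfl

/-- If `u, v` are adjacent in the `ℓ∞`-lattice graph on `ℤ^d`, `t₀` is the number of
coordinates where they agree and `t₁ = d - t₀`, then the number of their common
neighbours is `(3^{t₀} - 1)·2^{t₁} + 2^{t₁} - 2`; in particular, every edge lies in an
even number of triangles. -/
theorem latticeGraph_common_neighbors (d : ℕ) (u v : Fin d → ℤ)
    (huv : (latticeGraph d).Adj u v)
    (t₀ t₁ : ℕ)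
    (ht₀ : t₀ = (Finset.univ.filter (fun i : Fin d => u i = v i)).card)
    (ht₁ : t₁ = d - t₀) :
    {w : Fin d → ℤ | (latticeGraph d).Adj u w ∧ (latticeGraph d).Adj v w}.ncard
        = (3 ^ t₀ - 1) * 2 ^ t₁ + 2 ^ t₁ - 2 ∧
    Even {w : Fin d → ℤ | (latticeGraph d).Adj u w ∧ (latticeGraph d).Adj v w}.ncard := by
  obtain ⟨hne, hbd⟩ := huv
  set A : Fin d → Finset ℤ :=
    fun i => if u i = v i then {u i - 1, u i, u i + 1} else ({u i, v i} : Finset ℤ) with hA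
  have hSet : {w : Fin d → ℤ | (latticeGraph d).Adj u w ∧ (latticeGraph d).Adj v w}
      = ↑(Fintype.piFinset A \ {u, v}) := by
    ext w
    simp only [Set.mem_setOf_eq, Finset.coe_sdiff, Set.mem_diff, Finset.mem_coe,
      Fintype.mem_piFinset, Finset.coe_insert, Finset.coe_singleton, Set.mem_insert_iff,
      Set.mem_singleton_iff]
    constructor
    · rintro ⟨⟨h1, h2⟩, ⟨h3, h4⟩⟩
      refine ⟨fun i => ?_, ?_⟩
      · have b1 := abs_le.mp (h2 i)
        have b2 := abs_le.mp (h4 i)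
        by_cases h : u i = v i
        · simp only [hA, if_pos h, Finset.mem_insert, Finset.mem_singleton]
          omega
        · have b3 := abs_le.mp (hbd i)
          simp only [hA, if_neg h, Finset.mem_insert, Finset.mem_singleton]
          omega
      · push_neg
        exact ⟨fun h => h1 h.symm, fun h => h3 h.symm⟩
    · rintro ⟨hmem, hw⟩
      push_neg at hw
      refine ⟨⟨fun h => hw.1 h.symm, fun i => ?_⟩, fun h => hw.2 h.symm, fun i => ?_⟩
      all_goals {
        have := hmem i
        have b3 := abs_le.mp (hbd i)
        by_cases h : u i = v i
        · simp only [hA, if_pos h, Finset.mem_insert, Finset.mem_singleton] at this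
          rw [abs_le]; omega
        · simp only [hA, if_neg h, Finset.mem_insert, Finset.mem_singleton] at this
          rw [abs_le]; omega }
  have huA : u ∈ Fintype.piFinset A := by
    rw [Fintype.mem_piFinset]
    intro i
    by_cases h : u i = v i <;>
      simp [hA, h]
  have hvA : v ∈ Fintype.piFinset A := by
    rw [Fintype.mem_piFinset]
    intro i
    by_cases h : u i = v i <;>
      simp [hA, h]
  have hsub : ({u, v} : Finset (Fin d → ℤ)) ⊆ Fintype.piFinset A := by
    intro x hx
    rcases Finset.mem_insert.mp hx with h | h
    · exact h ▸ huA
    · rw [Finset.mem_singleton.mp h]; exact hvA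
  have hcardA : ∀ i, (A i).card = if u i = v i then 3 else 2 := by
    intro i
    by_cases h : u i = v i
    · simp only [hA, if_pos h]
      rw [Finset.card_insert_of_notMem (by simp; omega), Finset.card_insert_of_notMem (by simp),
        Finset.card_singleton]
    · simp only [hA, if_neg h]
      rw [Finset.card_insert_of_notMem (by simpa using h), Finset.card_singleton]
  have ht₁' : t₀ < d := by
    obtain ⟨i, hi⟩ := Function.ne_iff.mp hne
    rw [ht₀]
    have : Finset.univ.filter (fun i : Fin d => u i = v i) ⊂ Finset.univ :=
      ⟨Finset.filter_subset _ _, fun h => hi (by simpa using h (Finset.mem_univ i))⟩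
    simpa using Finset.card_lt_card this
  have hpi : (Fintype.piFinset A).card = 3 ^ t₀ * 2 ^ t₁ := by
    rw [Fintype.card_piFinset]
    calc ∏ i, (A i).card = ∏ i : Fin d, (if u i = v i then 3 else 2) := by
          exact Finset.prod_congr rfl fun i _ => hcardA i
      _ = 3 ^ t₀ * 2 ^ t₁ := by
          rw [Finset.prod_ite, Finset.prod_const, Finset.prod_const, ← ht₀]
          congr 1
          rw [ht₁]
          congr 1
          have := Finset.card_filter_add_card_filter_not
            (s := (Finset.univ : Finset (Fin d))) (p := fun i => u i = v i)
          simp only [Finset.card_univ, Fintype.card_fin] at this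
          omega
  have hcard : (Fintype.piFinset A \ {u, v}).card = 3 ^ t₀ * 2 ^ t₁ - 2 := by
    rw [Finset.card_sdiff_of_subset hsub, hpi, Finset.card_insert_of_notMem (by simpa using hne),
      Finset.card_singleton]
  have hnc : {w : Fin d → ℤ | (latticeGraph d).Adj u w ∧ (latticeGraph d).Adj v w}.ncard
      = 3 ^ t₀ * 2 ^ t₁ - 2 := by
    rw [hSet, Set.ncard_coe_finset, hcard]
  have h1 : 1 ≤ t₁ := by omega
  have h2 : 2 ≤ 2 ^ t₁ := by
    calc 2 = 2 ^ 1 := rfl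
      _ ≤ 2 ^ t₁ := Nat.pow_le_pow_right (by norm_num) h1
  have h3 : 1 ≤ 3 ^ t₀ := Nat.one_le_pow _ _ (by norm_num)
  have hmul : (3 ^ t₀ - 1) * 2 ^ t₁ = 3 ^ t₀ * 2 ^ t₁ - 2 ^ t₁ := by rw [Nat.sub_mul, one_mul]
  have hle : 2 ^ t₁ ≤ 3 ^ t₀ * 2 ^ t₁ := Nat.le_mul_of_pos_left _ (by omega)
  constructor
  · rw [hnc]; omega
  · rw [hnc]
    obtain ⟨k, hk⟩ : Even (3 ^ t₀ * 2 ^ t₁) := by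
      refine (Even.mul_left ?_ _)
      exact (Nat.even_pow.mpr ⟨even_two, by omega⟩)
    exact ⟨k - 1, by omega⟩
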